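/- Let d_s, m, k, n ∈ ℕ with n ≥ 1, let L : EuclideanSpace ℝ (Fin k) → ℝ and f : EuclideanSpace ℝ (Fin d_s) → EuclideanSpace ℝ (Fin k) be differentiable, and set L_S = L ∘ f. Define L₁ : (Fin n → EuclideanSpace ℝ (Fin d_s)) × EuclideanSpace ℝ (Fin m) → ℝ by L₁(θ₁,…,θₙ,η) = L((1/n)·∑_{i=1}^n f(θᵢ)). Then at every diagonal point w₀ = (θ,…,θ,η): the partial gradient of L₁ with respect to each block θᵢ equals (1/n)·gradient L_S θ, the partial gradient of L₁ with respect to η is zero, and consequently ‖gradient L₁ w₀‖² = (1/n)·‖gradient L_S θ‖². -/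

import Mathlib

noncomputable section

/-- The parameter space of the big model obtained by deep fusing `n` small models
with parameters in `ℝ^{d_s}`, with extra parameters `η ∈ ℝ^m`:
points `w = (θ₁,…,θₙ,η)`. -/
abbrev Wsp (d_s m n : ℕ) := EuclideanSpace ℝ ((Fin n × Fin d_s) ⊕ Fin m)

/-- The `i`-th parameter block `θᵢ` of a point `w = (θ₁,…,θₙ,η)`. -/
def blk {d_s m n : ℕ} (w : Wsp d_s m n) (i : Fin n) : EuclideanSpace ℝ (Fin d_s) :=
  WithLp.toLp 2 (fun a => w (Sum.inl (i, a)) : Fin d_s → ℝ)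

/-- Replace the `i`-th block of `w` by `θ'`, keeping all other components. -/
def updBlk {d_s m n : ℕ} (w : Wsp d_s m n) (i : Fin n)
    (θ' : EuclideanSpace ℝ (Fin d_s)) : Wsp d_s m n :=
  WithLp.toLp 2 (fun z => Sum.elim (fun p : Fin n × Fin d_s => if p.1 = i then θ' p.2 else w (Sum.inl p))
    (fun b => w (Sum.inr b)) z : ((Fin n × Fin d_s) ⊕ Fin m) → ℝ)

/-- Replace the `η`-component of `w` by `η'`, keeping the blocks. -/
def updEta {d_s m n : ℕ} (w : Wsp d_s m n) (η' : EuclideanSpace ℝ (Fin m)) :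
    Wsp d_s m n :=
  WithLp.toLp 2 (fun z => Sum.elim (fun p : Fin n × Fin d_s => w (Sum.inl p)) (fun b => η' b) z :
    ((Fin n × Fin d_s) ⊕ Fin m) → ℝ)

/-- The diagonal point `(θ,…,θ,η)`. -/
def diagPtEta {d_s m n : ℕ} (θ : EuclideanSpace ℝ (Fin d_s))
    (η : EuclideanSpace ℝ (Fin m)) : Wsp d_s m n :=
  WithLp.toLp 2 (fun z => Sum.elim (fun p : Fin n × Fin d_s => θ p.2) (fun b => η b) z :
    ((Fin n × Fin d_s) ⊕ Fin m) → ℝ)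

/- ### Auxiliary material -/

lemma grad_coord {ι : Type*} [Fintype ι] [DecidableEq ι]
    (g : EuclideanSpace ℝ ι → ℝ) (x : EuclideanSpace ℝ ι) (z : ι) :
    gradient g x z = fderiv ℝ g x (EuclideanSpace.single z 1) := by
  have h : (inner ℝ (gradient g x) (EuclideanSpace.single z (1:ℝ)) : ℝ)
      = fderiv ℝ g x (EuclideanSpace.single z 1) := by
    rw [gradient]
    exact InnerProductSpace.toDual_symm_apply
  rw [← h, real_inner_comm, EuclideanSpace.inner_single_left]
  simp

/-- Coordinate-block extraction as a continuous linear map. -/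
def blkL (d_s m n : ℕ) (i : Fin n) : Wsp d_s m n →L[ℝ] EuclideanSpace ℝ (Fin d_s) :=
  LinearMap.toContinuousLinearMap
  { toFun := fun w => WithLp.toLp 2 (fun a => w (Sum.inl (i, a)) : Fin d_s → ℝ)
    map_add' := fun _ _ => rfl
    map_smul' := fun _ _ => rfl }

/-- Inclusion of the `i`-th block as a continuous linear map. -/
def inclL (d_s m n : ℕ) (i : Fin n) :
    EuclideanSpace ℝ (Fin d_s) →L[ℝ] Wsp d_s m n :=
  LinearMap.toContinuousLinearMap
  { toFun := fun θ' => WithLp.toLp 2 (fun z => Sum.elim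
      (fun p : Fin n × Fin d_s => if p.1 = i then θ' p.2 else 0) (fun _ => 0) z :
        ((Fin n × Fin d_s) ⊕ Fin m) → ℝ)
    map_add' := by
      intro x y; ext z
      rcases z with p | b
      · simp only [Sum.elim_inl, PiLp.add_apply]
        split <;> simp
      · simp
    map_smul' := by
      intro c x; ext z
      rcases z with p | b
      · simp only [Sum.elim_inl, PiLp.smul_apply, RingHom.id_apply]
        split <;> simp
      · simp }

/-- Inclusion of the `η`-component as a continuous linear map. -/
def etaL (d_s m n : ℕ) :
    EuclideanSpace ℝ (Fin m) →L[ℝ] Wsp d_s m n :=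
  LinearMap.toContinuousLinearMap
  { toFun := fun η' => WithLp.toLp 2 (fun z => Sum.elim
      (fun _ : Fin n × Fin d_s => (0:ℝ)) (fun b => η' b) z :
        ((Fin n × Fin d_s) ⊕ Fin m) → ℝ)
    map_add' := by intro x y; ext z; rcases z with p | b <;> simp
    map_smul' := by intro c x; ext z; rcases z with p | b <;> simp }

lemma inclL_single (d_s m n : ℕ) (i : Fin n) (a : Fin d_s) :
    inclL d_s m n i (EuclideanSpace.single a 1)
      = EuclideanSpace.single (Sum.inl (i, a) : (Fin n × Fin d_s) ⊕ Fin m) (1:ℝ) := by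
  ext z
  rcases z with ⟨j, b⟩ | b
  · simp only [inclL, LinearMap.coe_toContinuousLinearMap', LinearMap.coe_mk, AddHom.coe_mk,
      Sum.elim_inl, EuclideanSpace.single_apply]
    split_ifs with h1 h2 h3 <;> simp_all [Prod.ext_iff]
  · simp [inclL, EuclideanSpace.single_apply]

lemma etaL_single (d_s m n : ℕ) (b : Fin m) :
    etaL d_s m n (EuclideanSpace.single b 1)
      = EuclideanSpace.single (Sum.inr b : (Fin n × Fin d_s) ⊕ Fin m) (1:ℝ) := by
  ext z
  rcases z with ⟨j, c⟩ | c
  · simp [etaL, EuclideanSpace.single_apply]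
  · simp only [etaL, LinearMap.coe_toContinuousLinearMap', LinearMap.coe_mk, AddHom.coe_mk,
      Sum.elim_inr, EuclideanSpace.single_apply]
    split_ifs with h1 h2 h3 <;> simp_all [Sum.inr.injEq]

open InnerProductSpace in
/-- **Gradient computation at the fusion point.** With `L₁(θ₁,…,θₙ,η) = L((1/n)∑ᵢ f(θᵢ))`
and `L_S = L ∘ f`, at every diagonal point `w₀ = (θ,…,θ,η)` the block partial gradients
of `L₁` equal `(1/n)∇L_S(θ)`, the `η` partial gradient of `L₁` is zero, and
`‖∇L₁(w₀)‖² = (1/n)‖∇L_S(θ)‖²`. -/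
theorem stmt_18 (d_s m k n : ℕ) (hn : 1 ≤ n)
    (L : EuclideanSpace ℝ (Fin k) → ℝ) (hL : Differentiable ℝ L)
    (f : EuclideanSpace ℝ (Fin d_s) → EuclideanSpace ℝ (Fin k))
    (hf : Differentiable ℝ f)
    (L_S : EuclideanSpace ℝ (Fin d_s) → ℝ) (hLS : L_S = L ∘ f)
    (L₁ : Wsp d_s m n → ℝ)
    (hL₁ : L₁ = fun w => L ((1 / (n : ℝ)) • ∑ i : Fin n, f (blk w i)))
    (θ : EuclideanSpace ℝ (Fin d_s)) (η : EuclideanSpace ℝ (Fin m)) :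
    (∀ i : Fin n,
        gradient (fun θ' => L₁ (updBlk (diagPtEta θ η) i θ')) θ
          = (1 / (n : ℝ)) • gradient L_S θ)
    ∧ gradient (fun η' => L₁ (updEta (diagPtEta θ η) η')) η = 0
    ∧ ‖gradient L₁ (diagPtEta θ η)‖ ^ 2 = (1 / (n : ℝ)) * ‖gradient L_S θ‖ ^ 2 := by
  have hn0 : (n : ℝ) ≠ 0 := Nat.cast_ne_zero.mpr (by omega)
  set w₀ : Wsp d_s m n := diagPtEta θ η with hw₀
  -- blocks of an updated diagonal point
  have hblk : ∀ (i : Fin n) (θ' : EuclideanSpace ℝ (Fin d_s)) (j : Fin n),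
      blk (updBlk w₀ i θ') j = if j = i then θ' else θ := by
    intro i θ' j
    ext a
    show (if j = i then θ' a else w₀ (Sum.inl (j, a))) = (if j = i then θ' else θ) a
    split <;> rfl
  -- the `i`-th block restriction in closed form
  have hgi : ∀ i : Fin n, (fun θ' => L₁ (updBlk w₀ i θ'))
      = fun θ' => L ((1 / (n:ℝ)) • ((f θ' - f θ) + (n:ℝ) • f θ)) := by
    intro i; funext θ'
    simp only [hL₁]
    have hsum : ∑ j : Fin n, f (blk (updBlk w₀ i θ') j)
        = (f θ' - f θ) + (n:ℝ) • f θ := by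
      have h1 : ∀ j : Fin n, f (blk (updBlk w₀ i θ') j)
          = (if j = i then f θ' - f θ else 0) + f θ := by
        intro j; rw [hblk]; split <;> simp
      rw [Finset.sum_congr rfl (fun j _ => h1 j), Finset.sum_add_distrib,
        Finset.sum_ite_eq' Finset.univ i (fun _ => f θ' - f θ), Finset.sum_const]
      simp [Nat.cast_smul_eq_nsmul ℝ n (f θ)]
    rw [hsum]
  -- differentiability data
  have hfd : fderiv ℝ L_S θ = (fderiv ℝ L (f θ)).comp (fderiv ℝ f θ) := by
    rw [hLS]; exact fderiv_comp θ (hL (f θ)) (hf θ)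
  have hDfi : ∀ i : Fin n, HasFDerivAt (fun θ' => L₁ (updBlk w₀ i θ'))
      ((1/(n:ℝ)) • fderiv ℝ L_S θ) θ := by
    intro i
    rw [hgi i]
    have hφ : HasFDerivAt (fun y : EuclideanSpace ℝ (Fin k) =>
        (1/(n:ℝ)) • ((y - f θ) + (n:ℝ) • f θ))
        ((1/(n:ℝ)) • ContinuousLinearMap.id ℝ (EuclideanSpace ℝ (Fin k))) (f θ) :=
      (((hasFDerivAt_id (f θ)).sub_const (f θ)).add_const ((n:ℝ) • f θ)).fun_const_smul _
    have hφθ : (1/(n:ℝ)) • ((f θ - f θ) + (n:ℝ) • f θ) = f θ := by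
      rw [sub_self, zero_add, smul_smul]
      field_simp
      rw [one_smul]
    have hLd : HasFDerivAt L (fderiv ℝ L (f θ))
        ((1/(n:ℝ)) • ((f θ - f θ) + (n:ℝ) • f θ)) := by
      rw [hφθ]; exact (hL (f θ)).hasFDerivAt
    have total := hLd.comp θ (hφ.comp θ (hf θ).hasFDerivAt)
    have heq : ((fderiv ℝ L (f θ)).comp
        (((1/(n:ℝ)) • ContinuousLinearMap.id ℝ (EuclideanSpace ℝ (Fin k))).comp
          (fderiv ℝ f θ))) = (1/(n:ℝ)) • fderiv ℝ L_S θ := by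
      ext v
      simp [hfd, map_smul]
    exact heq ▸ total
  have part1 : ∀ i : Fin n, gradient (fun θ' => L₁ (updBlk w₀ i θ')) θ
      = (1/(n:ℝ)) • gradient L_S θ := by
    intro i
    rw [gradient, gradient, (hDfi i).fderiv, map_smul]
  -- η-restriction is constant
  have hconst : (fun η' => L₁ (updEta w₀ η')) = fun _ => L₁ w₀ := by
    funext η'
    simp only [hL₁]
    rfl
  have part2 : gradient (fun η' => L₁ (updEta w₀ η')) η = 0 := by
    rw [hconst]
    exact gradient_fun_const η (L₁ w₀)
  refine ⟨part1, part2, ?_⟩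
  -- differentiability of L₁
  have hblkL : ∀ i : Fin n, (fun w : Wsp d_s m n => blk w i) = blkL d_s m n i := fun i => rfl
  have hdiff : Differentiable ℝ L₁ := by
    rw [hL₁]
    apply hL.comp
    apply Differentiable.fun_const_smul
    apply Differentiable.fun_sum
    intro i _
    have : (fun w : Wsp d_s m n => f (blk w i)) = f ∘ (blkL d_s m n i) := by
      rw [← hblkL]; rfl
    rw [this]
    exact hf.comp (blkL d_s m n i).differentiable
  -- affine description of updBlk and updEta at the diagonal point
  have hupd : ∀ (i : Fin n) (θ' : EuclideanSpace ℝ (Fin d_s)),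
      updBlk w₀ i θ' = w₀ + inclL d_s m n i (θ' - θ) := by
    intro i θ'
    ext z
    rcases z with ⟨j, a⟩ | b
    · show (if j = i then θ' a else w₀ (Sum.inl (j,a)))
        = (w₀ + inclL d_s m n i (θ' - θ)) (Sum.inl (j,a))
      rw [PiLp.add_apply]
      show _ = w₀ (Sum.inl (j,a)) + (if j = i then (θ' - θ) a else 0)
      have hw : w₀ (Sum.inl (j,a)) = θ a := rfl
      rw [hw, PiLp.sub_apply]
      split <;> ring
    · show w₀ (Sum.inr b) = (w₀ + inclL d_s m n i (θ' - θ)) (Sum.inr b)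
      rw [PiLp.add_apply]
      show _ = w₀ (Sum.inr b) + 0
      ring
  have hupdEta : ∀ η' : EuclideanSpace ℝ (Fin m),
      updEta w₀ η' = w₀ + etaL d_s m n (η' - η) := by
    intro η'
    ext z
    rcases z with ⟨j, a⟩ | b
    · show w₀ (Sum.inl (j,a)) = (w₀ + etaL d_s m n (η' - η)) (Sum.inl (j,a))
      rw [PiLp.add_apply]
      show _ = w₀ (Sum.inl (j,a)) + 0
      ring
    · show η' b = (w₀ + etaL d_s m n (η' - η)) (Sum.inr b)
      rw [PiLp.add_apply]
      show _ = w₀ (Sum.inr b) + (η' - η) b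
      have hw : w₀ (Sum.inr b) = η b := rfl
      rw [hw, PiLp.sub_apply]
      ring
  have hA : ∀ i : Fin n, HasFDerivAt (fun θ' => updBlk w₀ i θ') (inclL d_s m n i) θ := by
    intro i
    have h0 : (fun θ' => updBlk w₀ i θ') = fun θ' => w₀ + inclL d_s m n i (θ' - θ) :=
      funext (hupd i)
    rw [h0]
    have h1 : HasFDerivAt (fun θ' : EuclideanSpace ℝ (Fin d_s) => inclL d_s m n i (θ' - θ))
        (inclL d_s m n i) θ := by
      have h1' := (inclL d_s m n i).hasFDerivAt.comp θ ((hasFDerivAt_id θ).sub_const θ)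
      rw [ContinuousLinearMap.comp_id] at h1'
      exact h1'
    exact h1.const_add w₀
  have hAeta : HasFDerivAt (fun η' => updEta w₀ η') (etaL d_s m n : _ →L[ℝ] Wsp d_s m n) η := by
    have h0 : (fun η' => updEta w₀ η') = fun η' => w₀ + etaL d_s m n (η' - η) :=
      funext hupdEta
    rw [h0]
    have h1 : HasFDerivAt (fun η' : EuclideanSpace ℝ (Fin m) => etaL d_s m n (η' - η))
        (etaL d_s m n : _ →L[ℝ] Wsp d_s m n) η := by
      have h1' := (etaL d_s m n).hasFDerivAt.comp η ((hasFDerivAt_id η).sub_const η)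
      rw [ContinuousLinearMap.comp_id] at h1'
      exact h1'
    exact h1.const_add w₀
  have hupd0 : ∀ i : Fin n, updBlk w₀ i θ = w₀ := by
    intro i; rw [hupd]; simp
  have hupdEta0 : updEta w₀ η = w₀ := by rw [hupdEta]; simp
  have hfd_blk : ∀ i : Fin n, fderiv ℝ (fun θ' => L₁ (updBlk w₀ i θ')) θ
      = (fderiv ℝ L₁ w₀).comp (inclL d_s m n i) := by
    intro i
    have hd : HasFDerivAt L₁ (fderiv ℝ L₁ w₀) (updBlk w₀ i θ) := by
      rw [hupd0 i]; exact (hdiff w₀).hasFDerivAt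
    exact (hd.comp θ (hA i)).fderiv
  have hfd_eta : fderiv ℝ (fun η' => L₁ (updEta w₀ η')) η
      = (fderiv ℝ L₁ w₀).comp (etaL d_s m n) := by
    have hd : HasFDerivAt L₁ (fderiv ℝ L₁ w₀) (updEta w₀ η) := by
      rw [hupdEta0]; exact (hdiff w₀).hasFDerivAt
    exact (hd.comp η hAeta).fderiv
  -- coordinates of the full gradient
  have hcoordL : ∀ (i : Fin n) (a : Fin d_s),
      gradient L₁ w₀ (Sum.inl (i, a)) = (1/(n:ℝ)) * gradient L_S θ a := by
    intro i a
    rw [grad_coord, ← inclL_single d_s m n i a]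
    have h1 : fderiv ℝ L₁ w₀ (inclL d_s m n i (EuclideanSpace.single a 1))
        = fderiv ℝ (fun θ' => L₁ (updBlk w₀ i θ')) θ (EuclideanSpace.single a 1) := by
      rw [hfd_blk i]; rfl
    rw [h1, ← grad_coord, part1 i]
    rw [PiLp.smul_apply]
    simp
  have hcoordR : ∀ b : Fin m, gradient L₁ w₀ (Sum.inr b) = 0 := by
    intro b
    rw [grad_coord, ← etaL_single d_s m n b]
    have h1 : fderiv ℝ L₁ w₀ (etaL d_s m n (EuclideanSpace.single b 1))
        = fderiv ℝ (fun η' => L₁ (updEta w₀ η')) η (EuclideanSpace.single b 1) := by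
      rw [hfd_eta]; rfl
    rw [h1, hconst]
    simp
  -- norm computation
  have hGsq : ‖gradient L_S θ‖^2 = ∑ a : Fin d_s, (gradient L_S θ a)^2 := by
    rw [PiLp.norm_sq_eq_of_L2]
    simp [Real.norm_eq_abs, sq_abs]
  have hNsq : ‖gradient L₁ w₀‖^2
      = ∑ z : (Fin n × Fin d_s) ⊕ Fin m, (gradient L₁ w₀ z)^2 := by
    rw [PiLp.norm_sq_eq_of_L2]
    simp [Real.norm_eq_abs, sq_abs]
  rw [hNsq, hGsq, Fintype.sum_sum_type, Fintype.sum_prod_type]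
  simp only [hcoordL, hcoordR]
  simp only [mul_pow, ← Finset.mul_sum, Finset.sum_const, Finset.card_univ, Fintype.card_fin,
    ne_eq, OfNat.ofNat_ne_zero, not_false_eq_true, zero_pow, Finset.sum_const_zero, add_zero,
    smul_eq_mul]
  field_simp
  ring
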